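/- On the 5-dimensional solvable Lie algebra with de¹ = de² = 0, de³ = e¹∧e³, de⁴ = −e¹∧e⁴, de⁵ = e³∧e⁴, any invariant SU(2)-structure (η, ω₁, ω₂, ω₃) fails the hypo conditions: there is no quadruple with d(ω₁∧η) = d(ω₂∧η) = dω₃ = 0 and ω₁∧ω₁ = ω₂∧ω₂ = ω₃∧ω₃ a nonzero multiple of e²∧e³∧e⁴∧e⁵ (up to change of basis), ω₃∧ω₃∧η ≠ 0, and ωᵢ∧ωⱼ = 0 for i ≠ j. Concretely: if dω₃ = 0 and ω₃∧ω₃∧η ≠ 0 with d(ω₁∧η) = d(ω₂∧η) = 0, then ω₁∧ω₁ = 0, contradicting ω₁∧ω₁ = ω₃∧ω₃. -/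

import Mathlib

/-- The generators `e¹, …, e⁵` (0-indexed) of the exterior algebra of the dual
of a 5-dimensional Lie algebra. -/
noncomputable def E : Fin 5 → ExteriorAlgebra ℝ (Fin 5 → ℝ) :=
  fun i => ExteriorAlgebra.ι ℝ (Pi.single i 1)

namespace NH

open ExteriorAlgebra

abbrev Λ : Type := ExteriorAlgebra ℝ (Fin 5 → ℝ)

noncomputable def V : Fin 5 → (Fin 5 → ℝ) := fun i => Pi.single i 1

lemma E_eq (i : Fin 5) : E i = ExteriorAlgebra.ι ℝ (V i) := rfl

lemma sq (i : Fin 5) : E i * E i = 0 := ι_sq_zero _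

lemma sq' (i : Fin 5) (x : Λ) : E i * (E i * x) = 0 := by rw [← mul_assoc, sq, zero_mul]

lemma sw (i j : Fin 5) : E j * E i = -(E i * E j) :=
  eq_neg_of_add_eq_zero_right (ι_add_mul_swap _ _)

lemma sw' (i j : Fin 5) (x : Λ) : E j * (E i * x) = -(E i * (E j * x)) := by
  rw [← mul_assoc, sw, neg_mul, mul_assoc]

lemma s10 : E 1 * E 0 = -(E 0 * E 1) := sw 0 1
lemma s20 : E 2 * E 0 = -(E 0 * E 2) := sw 0 2
lemma s30 : E 3 * E 0 = -(E 0 * E 3) := sw 0 3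
lemma s40 : E 4 * E 0 = -(E 0 * E 4) := sw 0 4
lemma s21 : E 2 * E 1 = -(E 1 * E 2) := sw 1 2
lemma s31 : E 3 * E 1 = -(E 1 * E 3) := sw 1 3
lemma s41 : E 4 * E 1 = -(E 1 * E 4) := sw 1 4
lemma s32 : E 3 * E 2 = -(E 2 * E 3) := sw 2 3
lemma s42 : E 4 * E 2 = -(E 2 * E 4) := sw 2 4
lemma s43 : E 4 * E 3 = -(E 3 * E 4) := sw 3 4
lemma w10 (x : Λ) : E 1 * (E 0 * x) = -(E 0 * (E 1 * x)) := sw' 0 1 x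
lemma w20 (x : Λ) : E 2 * (E 0 * x) = -(E 0 * (E 2 * x)) := sw' 0 2 x
lemma w30 (x : Λ) : E 3 * (E 0 * x) = -(E 0 * (E 3 * x)) := sw' 0 3 x
lemma w40 (x : Λ) : E 4 * (E 0 * x) = -(E 0 * (E 4 * x)) := sw' 0 4 x
lemma w21 (x : Λ) : E 2 * (E 1 * x) = -(E 1 * (E 2 * x)) := sw' 1 2 x
lemma w31 (x : Λ) : E 3 * (E 1 * x) = -(E 1 * (E 3 * x)) := sw' 1 3 x
lemma w41 (x : Λ) : E 4 * (E 1 * x) = -(E 1 * (E 4 * x)) := sw' 1 4 x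
lemma w32 (x : Λ) : E 3 * (E 2 * x) = -(E 2 * (E 3 * x)) := sw' 2 3 x
lemma w42 (x : Λ) : E 4 * (E 2 * x) = -(E 2 * (E 4 * x)) := sw' 2 4 x
lemma w43 (x : Λ) : E 4 * (E 3 * x) = -(E 3 * (E 4 * x)) := sw' 3 4 x

noncomputable def coeff {k : ℕ} (s : Fin k → Fin 5) : Λ →ₗ[ℝ] ℝ :=
  ExteriorAlgebra.liftAlternating
    (Pi.single k (Matrix.detRowAlternating.compLinearMap (LinearMap.funLeft ℝ ℝ s)))

lemma coeff_apply {k : ℕ} (s : Fin k → Fin 5) (w : Fin k → (Fin 5 → ℝ)) :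
    coeff s (ExteriorAlgebra.ιMulti ℝ k w) = Matrix.det (Matrix.of fun a b => w a (s b)) := by
  rw [coeff, ExteriorAlgebra.liftAlternating_apply_ιMulti, Pi.single_eq_same]; rfl

lemma mono3 (i j k : Fin 5) :
    E i * (E j * E k) = ExteriorAlgebra.ιMulti ℝ 3 ![V i, V j, V k] := by
  simp [ExteriorAlgebra.ιMulti_apply, List.ofFn_succ, E_eq, mul_assoc]

lemma mono4 (i j k l : Fin 5) :
    E i * (E j * (E k * E l)) = ExteriorAlgebra.ιMulti ℝ 4 ![V i, V j, V k, V l] := by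
  simp [ExteriorAlgebra.ιMulti_apply, List.ofFn_succ, E_eq, mul_assoc]

lemma coeff3 (s : Fin 3 → Fin 5) (i j k : Fin 5) :
    coeff s (E i * (E j * E k)) = Matrix.det (Matrix.of fun a b => (![V i, V j, V k] a) (s b)) := by
  rw [mono3, coeff_apply]

lemma coeff4 (s : Fin 4 → Fin 5) (i j k l : Fin 5) :
    coeff s (E i * (E j * (E k * E l)))
      = Matrix.det (Matrix.of fun a b => (![V i, V j, V k, V l] a) (s b)) := by
  rw [mono4, coeff_apply]

lemma det_fin_four (M : Matrix (Fin 4) (Fin 4) ℝ) :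
    M.det =
      M 0 0 * (M 1 1 * (M 2 2 * M 3 3 - M 2 3 * M 3 2)
             - M 1 2 * (M 2 1 * M 3 3 - M 2 3 * M 3 1)
             + M 1 3 * (M 2 1 * M 3 2 - M 2 2 * M 3 1))
    - M 0 1 * (M 1 0 * (M 2 2 * M 3 3 - M 2 3 * M 3 2)
             - M 1 2 * (M 2 0 * M 3 3 - M 2 3 * M 3 0)
             + M 1 3 * (M 2 0 * M 3 2 - M 2 2 * M 3 0))
    + M 0 2 * (M 1 0 * (M 2 1 * M 3 3 - M 2 3 * M 3 1)
             - M 1 1 * (M 2 0 * M 3 3 - M 2 3 * M 3 0)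
             + M 1 3 * (M 2 0 * M 3 1 - M 2 1 * M 3 0))
    - M 0 3 * (M 1 0 * (M 2 1 * M 3 2 - M 2 2 * M 3 1)
             - M 1 1 * (M 2 0 * M 3 2 - M 2 2 * M 3 0)
             + M 1 2 * (M 2 0 * M 3 1 - M 2 1 * M 3 0)) := by
  rw [Matrix.det_succ_row_zero]
  simp [Fin.sum_univ_succ, Matrix.det_fin_three, Matrix.submatrix_apply, Fin.succ_ne_zero,
    show Fin.succ (2 : Fin 3) = (3 : Fin 4) by decide,
    show Fin.castSucc (2 : Fin 3) = (2 : Fin 4) by decide,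
    show (1 : Fin 4).succAbove 2 = (3 : Fin 4) by decide,
    show (2 : Fin 4).succAbove 2 = (3 : Fin 4) by decide,
    show (3 : Fin 4).succAbove 2 = (2 : Fin 4) by decide,
    show (0 : Fin 4).succAbove 2 = (3 : Fin 4) by decide]
  ring

lemma rep1 {η : Λ} (h : η ∈ Submodule.span ℝ (Set.range E)) :
    ∃ g : Fin 5 → ℝ,
      η = g 0 • E 0 + g 1 • E 1 + g 2 • E 2 + g 3 • E 3 + g 4 • E 4 := by
  obtain ⟨g, hg⟩ := (Submodule.mem_span_range_iff_exists_fun ℝ).mp h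
  exact ⟨g, by rw [← hg, Fin.sum_univ_five]⟩

lemma rep2 {ω : Λ} (h : ω ∈ Submodule.span ℝ {x | ∃ i j, x = E i * E j}) :
    ∃ q : Fin 5 → Fin 5 → ℝ,
      ω = q 0 1 • (E 0 * E 1) + q 0 2 • (E 0 * E 2) + q 0 3 • (E 0 * E 3) + q 0 4 • (E 0 * E 4)
        + q 1 2 • (E 1 * E 2) + q 1 3 • (E 1 * E 3) + q 1 4 • (E 1 * E 4)
        + q 2 3 • (E 2 * E 3) + q 2 4 • (E 2 * E 4) + q 3 4 • (E 3 * E 4) := by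
  have hset : {x : Λ | ∃ i j, x = E i * E j}
      = Set.range (fun p : Fin 5 × Fin 5 => E p.1 * E p.2) := by
    ext x
    constructor
    · rintro ⟨i, j, rfl⟩; exact ⟨(i, j), rfl⟩
    · rintro ⟨⟨i, j⟩, rfl⟩; exact ⟨i, j, rfl⟩
  rw [hset] at h
  obtain ⟨c, hc⟩ := (Submodule.mem_span_range_iff_exists_fun ℝ).mp h
  refine ⟨fun i j => c (i, j) - c (j, i), ?_⟩
  rw [← hc, Fintype.sum_prod_type]
  simp only [Fin.sum_univ_five]
  simp only [sq, smul_zero, sw 0 1, sw 0 2, sw 0 3, sw 0 4, sw 1 2, sw 1 3, sw 1 4,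
    sw 2 3, sw 2 4, sw 3 4, smul_neg]
  module

end NH

set_option maxHeartbeats 4000000

/-- On the 5-dimensional solvable Lie algebra with `de¹ = de² = 0`,
`de³ = e¹∧e³`, `de⁴ = −e¹∧e⁴`, `de⁵ = e³∧e⁴`, there is no invariant hypo
SU(2)-structure: no 1-form `η` and invariant 2-forms `ω₁, ω₂, ω₃` satisfy
`ω₁∧ω₁ = ω₂∧ω₂ = ω₃∧ω₃`, `ωᵢ∧ωⱼ = 0` for `i ≠ j`, `ω₃∧ω₃∧η ≠ 0` together
with the hypo conditions `d(ω₁∧η) = d(ω₂∧η) = dω₃ = 0`. -/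

theorem no_invariant_hypo_solvable
    (d : ExteriorAlgebra ℝ (Fin 5 → ℝ) →ₗ[ℝ] ExteriorAlgebra ℝ (Fin 5 → ℝ))
    (hd1 : d 1 = 0)
    (hLeib : ∀ (v : Fin 5 → ℝ) (x : ExteriorAlgebra ℝ (Fin 5 → ℝ)),
      d (ExteriorAlgebra.ι ℝ v * x)
        = d (ExteriorAlgebra.ι ℝ v) * x - ExteriorAlgebra.ι ℝ v * d x)
    (h1 : d (E 0) = 0) (h2 : d (E 1) = 0)
    (h3 : d (E 2) = E 0 * E 2) (h4 : d (E 3) = -(E 0 * E 3))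
    (h5 : d (E 4) = E 2 * E 3) :
    ¬ ∃ η ω₁ ω₂ ω₃ : ExteriorAlgebra ℝ (Fin 5 → ℝ),
      η ∈ Submodule.span ℝ (Set.range E) ∧
      ω₁ ∈ Submodule.span ℝ {x | ∃ i j, x = E i * E j} ∧
      ω₂ ∈ Submodule.span ℝ {x | ∃ i j, x = E i * E j} ∧
      ω₃ ∈ Submodule.span ℝ {x | ∃ i j, x = E i * E j} ∧
      ω₁ * ω₁ = ω₃ * ω₃ ∧ ω₂ * ω₂ = ω₃ * ω₃ ∧
      ω₁ * ω₂ = 0 ∧ ω₁ * ω₃ = 0 ∧ ω₂ * ω₃ = 0 ∧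
      ω₃ * ω₃ * η ≠ 0 ∧
      d (ω₁ * η) = 0 ∧ d (ω₂ * η) = 0 ∧ d ω₃ = 0 := by
  rintro ⟨η, ω₁, ω₂, ω₃, hη, hω₁, hω₂, hω₃, h11, h22, h12o, h13o, h23o, hne, hdw1, hdw2, hdw3⟩
  obtain ⟨g, hg⟩ := NH.rep1 hη
  obtain ⟨p, hp⟩ := NH.rep2 hω₁
  obtain ⟨q, hq⟩ := NH.rep2 hω₃
  have hL : ∀ (i : Fin 5) (x : ExteriorAlgebra ℝ (Fin 5 → ℝ)),
      d (E i * x) = d (E i) * x - E i * d x := fun i x => hLeib _ x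
  -- differentials of the basic 2-monomials
  have d01 : d (E 0 * E 1) = 0 := by rw [hL, h1, h2]; simp
  have d02 : d (E 0 * E 2) = 0 := by rw [hL, h1, h3]; simp [NH.sq']
  have d03 : d (E 0 * E 3) = 0 := by rw [hL, h1, h4]; simp [NH.sq']
  have d04 : d (E 0 * E 4) = -(E 0 * (E 2 * E 3)) := by rw [hL, h1, h5]; simp
  have d12 : d (E 1 * E 2) = E 0 * (E 1 * E 2) := by rw [hL, h2, h3]; simp [NH.w10]
  have d13 : d (E 1 * E 3) = -(E 0 * (E 1 * E 3)) := by rw [hL, h2, h4]; simp [NH.w10]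
  have d14 : d (E 1 * E 4) = -(E 1 * (E 2 * E 3)) := by rw [hL, h2, h5]; simp
  have d23 : d (E 2 * E 3) = 0 := by rw [hL, h3, h4]; simp [mul_assoc, NH.w20]
  have d24 : d (E 2 * E 4) = E 0 * (E 2 * E 4) := by rw [hL, h3, h5]; simp [mul_assoc, NH.sq']
  have d34 : d (E 3 * E 4) = -(E 0 * (E 3 * E 4)) := by
    rw [hL, h4, h5]; simp [mul_assoc, NH.w32, NH.sq]
  -- differentials of the basic 3-monomials
  have t012 : d (E 0 * (E 1 * E 2)) = 0 := by rw [hL, h1, d12]; simp [NH.sq']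
  have t013 : d (E 0 * (E 1 * E 3)) = 0 := by rw [hL, h1, d13]; simp [NH.sq']
  have t014 : d (E 0 * (E 1 * E 4)) = E 0 * (E 1 * (E 2 * E 3)) := by rw [hL, h1, d14]; simp
  have t023 : d (E 0 * (E 2 * E 3)) = 0 := by rw [hL, h1, d23]; simp
  have t024 : d (E 0 * (E 2 * E 4)) = 0 := by rw [hL, h1, d24]; simp [NH.sq']
  have t034 : d (E 0 * (E 3 * E 4)) = 0 := by rw [hL, h1, d34]; simp [NH.sq']
  have t123 : d (E 1 * (E 2 * E 3)) = 0 := by rw [hL, h2, d23]; simp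
  have t124 : d (E 1 * (E 2 * E 4)) = E 0 * (E 1 * (E 2 * E 4)) := by
    rw [hL, h2, d24]; simp [NH.w10]
  have t134 : d (E 1 * (E 3 * E 4)) = -(E 0 * (E 1 * (E 3 * E 4))) := by
    rw [hL, h2, d34]; simp [NH.w10]
  have t234 : d (E 2 * (E 3 * E 4)) = 0 := by rw [hL, h3, d34]; simp [mul_assoc, NH.w20]
  -- closedness of ω₃ kills six coefficients
  have hdq := hdw3
  rw [hq] at hdq
  have e023 := congrArg (NH.coeff ![0,2,3]) hdq
  have e012 := congrArg (NH.coeff ![0,1,2]) hdq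
  have e013 := congrArg (NH.coeff ![0,1,3]) hdq
  have e123 := congrArg (NH.coeff ![1,2,3]) hdq
  have e024 := congrArg (NH.coeff ![0,2,4]) hdq
  have e034 := congrArg (NH.coeff ![0,3,4]) hdq
  simp [d01, d02, d03, d04, d12, d13, d14, d23, d24, d34, NH.coeff3, Matrix.det_fin_three,
    NH.V, Pi.single_apply, Matrix.vecHead, Matrix.vecTail, -mul_eq_zero]
      at e023 e012 e013 e123 e024 e034
  rw [e023, e012, e013, e123, e024, e034] at hq
  simp only [zero_smul, add_zero, zero_add] at hq
  have hkey : ω₃ * ω₃ * η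
      = (2 * (q 0 1 * q 2 3) * g 4) • (E 0 * (E 1 * (E 2 * (E 3 * E 4)))) := by
    rw [hq, hg]
    simp only [mul_add, add_mul, smul_mul_assoc, mul_smul_comm, mul_assoc, NH.sq, NH.sq',
      NH.s10, NH.s20, NH.s30, NH.s40, NH.s21, NH.s31, NH.s41, NH.s32, NH.s42, NH.s43,
      NH.w10, NH.w20, NH.w30, NH.w40, NH.w21, NH.w31, NH.w41, NH.w32, NH.w42, NH.w43,
      mul_neg, neg_mul, smul_neg, neg_neg, mul_zero, zero_mul, smul_zero, zero_smul,
      add_zero, zero_add, smul_smul]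
    module
  have hscal : 2 * (q 0 1 * q 2 3) * g 4 ≠ 0 := fun h0 => hne (by rw [hkey, h0, zero_smul])
  have hq01 : q 0 1 ≠ 0 := fun h0 => hscal (by rw [h0]; ring)
  have hq23 : q 2 3 ≠ 0 := fun h0 => hscal (by rw [h0]; ring)
  have hg4 : g 4 ≠ 0 := fun h0 => hscal (by rw [h0]; ring)
  have hpq := h13o
  rw [hp, hq] at hpq
  simp only [mul_add, add_mul, smul_mul_assoc, mul_smul_comm, mul_assoc, NH.sq, NH.sq',
    NH.s10, NH.s20, NH.s30, NH.s40, NH.s21, NH.s31, NH.s41, NH.s32, NH.s42, NH.s43,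
    NH.w10, NH.w20, NH.w30, NH.w40, NH.w21, NH.w31, NH.w41, NH.w32, NH.w42, NH.w43,
    mul_neg, neg_mul, smul_neg, neg_neg, mul_zero, zero_mul, smul_zero, zero_smul,
    add_zero, zero_add, smul_smul] at hpq
  have f1234 := congrArg (NH.coeff ![1,2,3,4]) hpq
  have f0124 := congrArg (NH.coeff ![0,1,2,4]) hpq
  have f0134 := congrArg (NH.coeff ![0,1,3,4]) hpq
  have f0234 := congrArg (NH.coeff ![0,2,3,4]) hpq
  have f0123 := congrArg (NH.coeff ![0,1,2,3]) hpq
  simp [NH.coeff4, NH.det_fin_four, NH.V, Pi.single_apply, Matrix.vecHead, Matrix.vecTail,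
    -mul_eq_zero] at f1234 f0124 f0134 f0234 f0123
  have hp14 : p 1 4 = 0 := by
    rcases mul_eq_zero.mp f1234 with h | h
    · exact absurd h hq23
    · exact h
  have hp24 : p 2 4 = 0 := by
    rw [hp14] at f0124
    have h' : q 0 1 * p 2 4 = 0 := by linarith
    rcases mul_eq_zero.mp h' with h | h
    · exact absurd h hq01
    · exact h
  have hp34 : p 3 4 = 0 := by
    rw [hp14] at f0134
    have h' : q 0 1 * p 3 4 = 0 := by linarith
    rcases mul_eq_zero.mp h' with h | h
    · exact absurd h hq01
    · exact h
  have hp04 : p 0 4 = 0 := by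
    rw [hp24, hp34] at f0234
    have h' : q 2 3 * p 0 4 = 0 := by linarith
    rcases mul_eq_zero.mp h' with h | h
    · exact absurd h hq23
    · exact h
  -- the hypo condition d(ω₁ ∧ η) = 0
  have hde := hdw1
  rw [hp, hg] at hde
  simp only [mul_add, add_mul, smul_mul_assoc, mul_smul_comm, mul_assoc, NH.sq, NH.sq',
    NH.s10, NH.s20, NH.s30, NH.s40, NH.s21, NH.s31, NH.s41, NH.s32, NH.s42, NH.s43,
    NH.w10, NH.w20, NH.w30, NH.w40, NH.w21, NH.w31, NH.w41, NH.w32, NH.w42, NH.w43,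
    mul_neg, neg_mul, smul_neg, neg_neg, mul_zero, zero_mul, smul_zero, zero_smul,
    add_zero, zero_add, smul_smul] at hde
  simp only [map_add, map_smul, map_neg, t012, t013, t014, t023, t024, t034, t123, t124,
    t134, t234, smul_zero, smul_neg, neg_zero, add_zero, zero_add, neg_neg] at hde
  have k0123 := congrArg (NH.coeff ![0,1,2,3]) hde
  have k0124 := congrArg (NH.coeff ![0,1,2,4]) hde
  have k0134 := congrArg (NH.coeff ![0,1,3,4]) hde
  simp [NH.coeff4, NH.det_fin_four, NH.V, Pi.single_apply, Matrix.vecHead, Matrix.vecTail,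
    -mul_eq_zero] at k0123 k0124 k0134
  have hp01 : p 0 1 = 0 := by
    rw [hp14, hp04] at k0123
    have h' : g 4 * p 0 1 = 0 := by linarith
    rcases mul_eq_zero.mp h' with h | h
    · exact absurd h hg4
    · exact h
  have hp12 : p 1 2 = 0 := by
    rw [hp14, hp24] at k0124
    have h' : g 4 * p 1 2 = 0 := by linarith
    rcases mul_eq_zero.mp h' with h | h
    · exact absurd h hg4
    · exact h
  have hp13 : p 1 3 = 0 := by
    rw [hp14, hp34] at k0134
    have h' : g 4 * p 1 3 = 0 := by linarith
    rcases mul_eq_zero.mp h' with h | h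
    · exact absurd h hg4
    · exact h
  have hp23 : p 2 3 = 0 := by
    rw [hp01, hp12, hp13] at f0123
    have h' : q 0 1 * p 2 3 = 0 := by linarith
    rcases mul_eq_zero.mp h' with h | h
    · exact absurd h hq01
    · exact h
  -- so ω₁ ∧ ω₁ = 0, contradicting ω₁ ∧ ω₁ = ω₃ ∧ ω₃ and ω₃ ∧ ω₃ ∧ η ≠ 0
  have hw : ω₁ * ω₁ = 0 := by
    rw [hp, hp01, hp04, hp12, hp13, hp14, hp23, hp24, hp34]
    simp only [mul_add, add_mul, smul_mul_assoc, mul_smul_comm, mul_assoc, NH.sq, NH.sq',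
      NH.s10, NH.s20, NH.s30, NH.s40, NH.s21, NH.s31, NH.s41, NH.s32, NH.s42, NH.s43,
      NH.w10, NH.w20, NH.w30, NH.w40, NH.w21, NH.w31, NH.w41, NH.w32, NH.w42, NH.w43,
      mul_neg, neg_mul, smul_neg, neg_neg, mul_zero, zero_mul, smul_zero, zero_smul,
      add_zero, zero_add, smul_smul, neg_zero]
  exact hne (by rw [← h11, hw, zero_mul])
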